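/- On ℝ³ \ {0}, define Ψ_Q^{ab} = (3/(2r²))(Q^a n^b + Q^b n^a − (δ^{ab} − n^a n^b) Q^c n_c) with n^a = x^a/r and Q^a a constant vector. Then Ψ_Q^{ab} is symmetric, trace-free, and satisfies ∂_a Ψ_Q^{ab} = 0 on ℝ³ \ {0}. -/

import Mathlib

open Metric Real

noncomputable section

abbrev E3 := EuclideanSpace ℝ (Fin 3)

/-- The radial unit normal n^a = x^a/r. -/
noncomputable def nv (x : E3) (i : Fin 3) : ℝ := x i / ‖x‖

/-- The flat metric (Kronecker delta). -/
def kd (i j : Fin 3) : ℝ := if i = j then 1 else 0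

/-- Ψ_Q^{ab} = (3/(2r²))(Q^a n^b + Q^b n^a − (δ^{ab} − n^a n^b) Q^c n_c). -/
noncomputable def PsiQ (Q : Fin 3 → ℝ) (x : E3) (i j : Fin 3) : ℝ :=
  3 / (2 * ‖x‖ ^ 2) *
    (Q i * nv x j + Q j * nv x i - (kd i j - nv x i * nv x j) * ∑ c, Q c * nv x c)

lemma norm_sq_eq (x : E3) : ‖x‖ ^ 2 = x 0 ^ 2 + x 1 ^ 2 + x 2 ^ 2 := by
  rw [EuclideanSpace.norm_eq, Real.sq_sqrt (by positivity)]
  simp [Fin.sum_univ_three]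

set_option maxHeartbeats 2000000 in
/-- Ψ_Q^{ab} is symmetric, trace-free and divergence-free on ℝ³ \ {0}. -/
theorem stmt12 (Q : Fin 3 → ℝ) :
    (∀ x : E3, ∀ i j, PsiQ Q x i j = PsiQ Q x j i) ∧
    (∀ x : E3, x ≠ 0 → ∑ i, PsiQ Q x i i = 0) ∧
    (∀ x : E3, x ≠ 0 → ∀ j : Fin 3,
      ∑ i, fderiv ℝ (fun y => PsiQ Q y i j) x (EuclideanSpace.single i 1) = 0) := by
  refine ⟨?_, ?_, ?_⟩
  · intro x i j
    unfold PsiQ kd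
    have : (if i = j then (1:ℝ) else 0) = (if j = i then 1 else 0) := by
      by_cases h : i = j <;> simp [h, eq_comm]
    rw [this]; ring
  · intro x hx
    have hr : ‖x‖ ≠ 0 := norm_ne_zero_iff.mpr hx
    have hr2 := norm_sq_eq x
    unfold PsiQ nv kd
    simp only [Fin.sum_univ_three]
    field_simp
    rw [if_pos trivial]
    linear_combination (-3 * (Q 0 * x 0 + Q 1 * x 1 + Q 2 * x 2)) * hr2
  · intro x hx j
    have hr : ‖x‖ ≠ 0 := norm_ne_zero_iff.mpr hx
    have hr2 := norm_sq_eq x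
    have h1 : HasFDerivAt (fun y : E3 => ‖y‖ ^ 2) (2 • innerSL ℝ x) x :=
      (hasStrictFDerivAt_norm_sq x).hasFDerivAt
    have h2 := (Real.hasDerivAt_sqrt (by positivity : (‖x‖ ^ 2) ≠ 0)).comp_hasFDerivAt x h1
    have hnorm : HasFDerivAt (fun y : E3 => ‖y‖)
        ((1 / (2 * √(‖x‖ ^ 2))) • (2 • innerSL ℝ x)) x := by
      refine h2.congr_of_eventuallyEq ?_
      filter_upwards with y
      simp [Function.comp, Real.sqrt_sq (norm_nonneg y)]
    have hu : HasFDerivAt (fun y : E3 => ‖y‖⁻¹)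
        ((-(‖x‖ ^ 2)⁻¹) • ((1 / (2 * √(‖x‖ ^ 2))) • (2 • innerSL ℝ x))) x :=
      (hasDerivAt_inv hr).comp_hasFDerivAt x hnorm
    have hk : ∀ k : Fin 3, HasFDerivAt (fun y : E3 => y k)
        (EuclideanSpace.proj k : E3 →L[ℝ] ℝ) x := by
      intro k
      exact (EuclideanSpace.proj k : E3 →L[ℝ] ℝ).hasFDerivAt
    have hS : HasFDerivAt (fun y : E3 => Q 0 * y 0 + Q 1 * y 1 + Q 2 * y 2)
        ((Q 0 • (EuclideanSpace.proj 0 : E3 →L[ℝ] ℝ) + Q 1 • (EuclideanSpace.proj 1 : E3 →L[ℝ] ℝ))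
          + Q 2 • (EuclideanSpace.proj 2 : E3 →L[ℝ] ℝ)) x :=
      (((hk 0).const_mul (Q 0)).add ((hk 1).const_mul (Q 1))).add ((hk 2).const_mul (Q 2))
    have key : ∀ i : Fin 3, fderiv ℝ (fun y => PsiQ Q y i j) x (EuclideanSpace.single i 1) =
        (3/2 : ℝ) * (
          -3 * (Q i * x j + Q j * x i - kd i j * (Q 0 * x 0 + Q 1 * x 1 + Q 2 * x 2)) * x i * (‖x‖⁻¹) ^ 5
          + (Q i * kd i j + Q j * kd i i - kd i j * Q i) * (‖x‖⁻¹) ^ 3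
          - 5 * (x i * x j * (Q 0 * x 0 + Q 1 * x 1 + Q 2 * x 2)) * x i * (‖x‖⁻¹) ^ 7
          + (x i * x j * Q i + (Q 0 * x 0 + Q 1 * x 1 + Q 2 * x 2) * (kd i i * x j + kd i j * x i)) * (‖x‖⁻¹) ^ 5) := by
      intro i
      have hGi := (((((hk j).const_mul (Q i)).add ((hk i).const_mul (Q j))).sub
          (hS.const_mul (kd i j))).mul ((hu.mul hu).mul hu)).add
          ((((hk i).mul (hk j)).mul hS).mul ((((hu.mul hu).mul hu).mul hu).mul hu)) |>.const_mul (3/2 : ℝ)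
      have hev : (fun y => PsiQ Q y i j) =ᶠ[nhds x] (fun y : E3 =>
          (3/2 : ℝ) * ((Q i * y j + Q j * y i - kd i j * (Q 0 * y 0 + Q 1 * y 1 + Q 2 * y 2)) * (‖y‖⁻¹ * ‖y‖⁻¹ * ‖y‖⁻¹)
            + y i * y j * (Q 0 * y 0 + Q 1 * y 1 + Q 2 * y 2) * (‖y‖⁻¹ * ‖y‖⁻¹ * ‖y‖⁻¹ * ‖y‖⁻¹ * ‖y‖⁻¹))) := by
        filter_upwards [IsOpen.mem_nhds isOpen_compl_singleton hx] with y hy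
        have hry : ‖y‖ ≠ 0 := norm_ne_zero_iff.mpr hy
        unfold PsiQ nv
        simp only [Fin.sum_univ_three]
        field_simp
        ring
      have hPsi := hGi.congr_of_eventuallyEq hev
      rw [hPsi.fderiv]
      simp only [ContinuousLinearMap.add_apply, ContinuousLinearMap.coe_smul',
        Pi.smul_apply, ContinuousLinearMap.smul_apply, innerSL_apply_apply, smul_eq_mul,
        PiLp.proj_apply, EuclideanSpace.inner_single_right, RingHom.id_apply,
        conj_trivial, EuclideanSpace.single_apply, Real.sqrt_sq (norm_nonneg x)]
      field_simp
      fin_cases i <;> fin_cases j <;> simp [kd] <;> field_simp <;> ring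
    simp only [Fin.sum_univ_three]
    have h3 : (‖x‖⁻¹) ^ 3 = (‖x‖⁻¹) ^ 7 * (x 0 ^ 2 + x 1 ^ 2 + x 2 ^ 2) ^ 2 := by
      rw [← hr2]; field_simp
    have h5 : (‖x‖⁻¹) ^ 5 = (‖x‖⁻¹) ^ 7 * (x 0 ^ 2 + x 1 ^ 2 + x 2 ^ 2) := by
      rw [← hr2]; field_simp
    rw [key 0, key 1, key 2, h3, h5]
    fin_cases j <;> simp [kd] <;> ring
end
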